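/- For every d ≥ 4, every bipartite graph on fewer than 2d vertices can be realized as a faithful unit distance graph in R^d, and there exists a bipartite graph on exactly 2d vertices (namely K_{d,d} minus a matching of size d-3) that cannot; hence the minimum number of vertices of a bipartite graph not realizable as a faithful distance graph in R^d equals 2d. -/

import Mathlib

/-- A graph is realizable as a faithful unit distance graph in `ℝ^d`. -/
def FDRealizable {V : Type} (G : SimpleGraph V) (d : ℕ) : Prop :=
  ∃ f : V → EuclideanSpace ℝ (Fin d), Function.Injective f ∧
    ∀ u v, u ≠ v → (G.Adj u v ↔ dist (f u) (f v) = 1)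

/-- `K_{d,d}` minus a matching of size `d - 3`: `a_i ~ b_j` unless `i = j` and `i ≥ 4`
(1-based), i.e. `3 ≤ i` (0-based). -/
def Kprime (d : ℕ) : SimpleGraph (Fin d ⊕ Fin d) :=
  SimpleGraph.fromRel (fun u v =>
    match u, v with
    | Sum.inl i, Sum.inr j => ¬ (i = j ∧ 3 ≤ i.val)
    | _, _ => False)

open Module Submodule

noncomputable section AuxFDR

variable {d : ℕ}

abbrev MM (d : ℕ) := ℝ × EuclideanSpace ℝ (Fin d) × ℝ

/-- The Lorentz-type bilinear form on the lift space. -/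
noncomputable def Bf (d : ℕ) : LinearMap.BilinForm ℝ (MM d) :=
  LinearMap.mk₂ ℝ (fun x y => x.1 * y.2.2 + x.2.2 * y.1 - 2 * (inner ℝ x.2.1 y.2.1 : ℝ))
    (by intro m₁ m₂ n
        simp only [Prod.fst_add, Prod.snd_add, inner_add_left]; ring)
    (by intro c m n
        simp only [Prod.smul_fst, Prod.smul_snd, smul_eq_mul, real_inner_smul_left]; ring)
    (by intro m n₁ n₂
        simp only [Prod.fst_add, Prod.snd_add, inner_add_right]; ring)
    (by intro c m n
        simp only [Prod.smul_fst, Prod.smul_snd, smul_eq_mul, real_inner_smul_right]; ring)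

lemma Bf_apply (x y : MM d) :
    Bf d x y = x.1 * y.2.2 + x.2.2 * y.1 - 2 * (inner ℝ x.2.1 y.2.1 : ℝ) := rfl

lemma Bf_symm (x y : MM d) : Bf d x y = Bf d y x := by
  rw [Bf_apply, Bf_apply, real_inner_comm]; ring

lemma Bf_nondeg (x : MM d) (h : ∀ y, Bf d x y = 0) : x = 0 := by
  obtain ⟨P, y, Q⟩ := x
  have h1 := h (0, 0, 1)
  have h2 := h (1, 0, 0)
  have h3 := h (0, y, 0)
  rw [Bf_apply] at h1 h2 h3
  simp only [inner_zero_right] at h1 h2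
  norm_num at h1 h2
  have hy : y = 0 := by
    have h3' : (inner ℝ y y : ℝ) = 0 := by simp only at h3; linarith
    exact inner_self_eq_zero.mp h3' 
  simp [h1, h2, hy]

lemma Bf_isRefl : (Bf d).IsRefl := by
  intro x y h; rw [Bf_symm] at h; exact h

/-- The lift of a point to the quadric. -/
noncomputable def lft (x : EuclideanSpace ℝ (Fin d)) : MM d := (‖x‖ ^ 2, x, 1)

lemma Bf_lft (a b : EuclideanSpace ℝ (Fin d)) :
    Bf d (lft a) (lft b) = dist a b ^ 2 := by
  rw [dist_eq_norm, norm_sub_sq_real, Bf_apply]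
  show ‖a‖ ^ 2 * 1 + 1 * ‖b‖ ^ 2 - 2 * (inner ℝ a b : ℝ) = _
  ring

def etaV (d : ℕ) : MM d := (1, 0, 0)

lemma Bf_eta_lft (a : EuclideanSpace ℝ (Fin d)) : Bf d (etaV d) (lft a) = 1 := by
  rw [Bf_apply]
  show 1 * 1 + 0 * ‖a‖ ^ 2 - 2 * (inner ℝ (0 : EuclideanSpace ℝ (Fin d)) a : ℝ) = 1
  simp

lemma Bf_lft_eta (a : EuclideanSpace ℝ (Fin d)) : Bf d (lft a) (etaV d) = 1 := by
  rw [Bf_symm]; exact Bf_eta_lft a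

lemma Bf_eta_eta : Bf d (etaV d) (etaV d) = 0 := by
  rw [Bf_apply]
  show 1 * 0 + 0 * 1 - 2 * (inner ℝ (0 : EuclideanSpace ℝ (Fin d)) (0 : EuclideanSpace ℝ (Fin d)) : ℝ) = 0
  simp

/-- Negative definiteness on the orthogonal complement of a positive vector. -/
lemma Bf_negdef (g h : MM d) (hg : 0 < Bf d g g) (hgh : Bf d g h = 0) (hh : h ≠ 0) :
    Bf d h h < 0 := by
  obtain ⟨P, x, Q⟩ := g
  obtain ⟨R, y, S⟩ := h
  rw [Bf_apply] at hg hgh ⊢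
  simp only at hg hgh ⊢
  rw [real_inner_self_eq_norm_sq] at hg
  have hx2 : (0:ℝ) ≤ ‖x‖ ^ 2 := by positivity
  have hPQ : ‖x‖ ^ 2 < P * Q := by nlinarith
  have hPQ0 : 0 < P * Q := lt_of_le_of_lt hx2 hPQ
  have hP : P ≠ 0 := by rintro rfl; simp at hPQ0
  by_cases hy : y = 0
  · subst hy
    simp only [inner_zero_right, inner_zero_left] at hgh ⊢
    have hgh' : P * S + Q * R = 0 := by linarith
    have hR : R ≠ 0 := by
      rintro rfl
      simp only [mul_zero, add_zero] at hgh'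
      rcases mul_eq_zero.mp hgh' with h | h
      · exact hP h
      · exact hh (by simp [h])
    have hR2 : 0 < R ^ 2 := by rcases hR.lt_or_gt with h | h <;> nlinarith
    have hP2 : 0 < P * P := by rcases hP.lt_or_gt with h | h <;> nlinarith
    have key : R * S * (P * P) = -(R ^ 2 * (Q * P)) := by
      linear_combination (R * P) * hgh'
    have hQP : 0 < Q * P := by rw [mul_comm]; exact hPQ0
    nlinarith [mul_pos hR2 hQP]
  · have hy2 : 0 < ‖y‖ ^ 2 := by
      have : 0 < ‖y‖ := norm_pos_iff.mpr hy
      positivity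
    have hcs : (inner ℝ x y : ℝ) ^ 2 ≤ ‖x‖ ^ 2 * ‖y‖ ^ 2 := by
      have := real_inner_mul_inner_self_le x y
      rw [real_inner_self_eq_norm_sq, real_inner_self_eq_norm_sq] at this
      rw [sq]; exact this
    rw [real_inner_self_eq_norm_sq]
    have h4 : (P * S + Q * R) ^ 2 = 4 * ((inner ℝ x y : ℝ)) ^ 2 := by
      linear_combination (P * S + Q * R + 2 * (inner ℝ x y : ℝ)) * hgh
    have key : 4 * (P * Q) * (R * S) < 4 * (P * Q) * ‖y‖ ^ 2 := by
      nlinarith [sq_nonneg (P * S - Q * R), mul_lt_mul_of_pos_right hPQ hy2]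
    have : R * S < ‖y‖ ^ 2 := by
      have := (mul_lt_mul_iff_of_pos_left (by linarith : (0:ℝ) < 4 * (P * Q))).mp key
      linarith
    nlinarith

lemma lft_snd (a : EuclideanSpace ℝ (Fin d)) : (lft a).2.2 = 1 := rfl

-- three pairwise "positively related" isotropic vectors are independent
lemma triple_indep (w0 w1 w2 : MM d)
    (h00 : Bf d w0 w0 = 0) (h11 : Bf d w1 w1 = 0) (h22 : Bf d w2 w2 = 0)
    (h01 : 0 < Bf d w0 w1) (h02 : 0 < Bf d w0 w2) (h12 : 0 < Bf d w1 w2)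
    (g0 g1 g2 : ℝ) (hsum : g0 • w0 + g1 • w1 + g2 • w2 = 0) :
    g0 = 0 ∧ g1 = 0 ∧ g2 = 0 := by
  have e0 := congrArg (fun t => Bf d t w0) hsum
  have e1 := congrArg (fun t => Bf d t w1) hsum
  have e2 := congrArg (fun t => Bf d t w2) hsum
  simp only [map_add, map_smul, LinearMap.add_apply, LinearMap.smul_apply,
    smul_eq_mul, LinearMap.zero_apply, LinearMap.map_zero₂] at e0 e1 e2
  rw [h00] at e0; rw [h11] at e1; rw [h22] at e2
  rw [Bf_symm w1 w0] at e0
  rw [Bf_symm w2 w0] at e0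
  rw [Bf_symm w2 w1] at e1
  -- e0 : g1 * B01 + g2 * B02 = 0 (up to the zero term)
  have hg2 : g2 = 0 := by
    have h : g2 * (2 * (Bf d w0 w2) * (Bf d w1 w2)) = 0 := by
      linear_combination (Bf d w1 w2) * e0 + (Bf d w0 w2) * e1 - (Bf d w0 w1) * e2
    rcases mul_eq_zero.mp h with h | h
    · exact h
    · nlinarith
  have hg1 : g1 = 0 := by
    have h : g1 * Bf d w0 w1 = 0 := by linear_combination e0 - g2 * Bf d w0 w2 * (by norm_num : (1:ℝ)=1) + (- (Bf d w0 w2)) * (by exact hg2 : g2 = 0)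
    rcases mul_eq_zero.mp h with h | h
    · exact h
    · nlinarith
  have hg0 : g0 = 0 := by
    have h : g0 * Bf d w0 w1 = 0 := by linear_combination e1 - (Bf d w1 w2) * hg2
    rcases mul_eq_zero.mp h with h | h
    · exact h
    · nlinarith
  exact ⟨hg0, hg1, hg2⟩
lemma indep_aux (hd : 4 ≤ d) (u v : Fin d → MM d)
    (huv : ∀ i j : Fin d, ¬(i = j ∧ 3 ≤ i.val) → Bf d (u i) (v j) = 1)
    (hne : ∀ i : Fin d, 3 ≤ i.val → Bf d (u i) (v i) ≠ 1)
    (hu0 : ∀ i : Fin d, i.val < 3 → Bf d (u i) (u i) = 0)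
    (hup : ∀ i k : Fin d, i.val < 3 → k.val < 3 → i ≠ k → 0 < Bf d (u i) (u k)) :
    LinearIndependent ℝ u := by
  rw [Fintype.linearIndependent_iff]
  intro g hg
  set i0 : Fin d := ⟨0, by omega⟩ with hi0
  set i1 : Fin d := ⟨1, by omega⟩ with hi1
  set i2 : Fin d := ⟨2, by omega⟩ with hi2
  have keyA : ∀ j : Fin d, (∑ i, g i) + g j * (Bf d (u j) (v j) - 1) = 0 := by
    intro j
    have h := congrArg (fun t => Bf d t (v j)) hg
    simp only [map_sum, map_smul, LinearMap.sum_apply, LinearMap.smul_apply,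
      smul_eq_mul, map_zero, LinearMap.zero_apply] at h
    have hsplit : ∀ i : Fin d, g i * Bf d (u i) (v j)
        = g i + (if i = j then g j * (Bf d (u j) (v j) - 1) else 0) := by
      intro i
      by_cases hij : i = j
      · subst hij; simp; ring
      · rw [huv i j (by tauto), if_neg hij]; ring
    rw [Finset.sum_congr rfl (fun i _ => hsplit i), Finset.sum_add_distrib,
      Finset.sum_ite_eq' Finset.univ j, if_pos (Finset.mem_univ j)] at h
    exact h
  have hsum0 : (∑ i, g i) = 0 := by
    have h := keyA i0
    rw [huv i0 i0 (by rintro ⟨-, h3⟩; simp [hi0] at h3)] at h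
    simpa using h
  have hbig : ∀ j : Fin d, 3 ≤ j.val → g j = 0 := by
    intro j hj
    have h := keyA j
    rw [hsum0, zero_add] at h
    rcases mul_eq_zero.mp h with h | h
    · exact h
    · exact absurd (by linarith : Bf d (u j) (v j) = 1) (hne j hj)
  -- reduce to the triple
  have hne01 : i0 ≠ i1 := by simp [hi0, hi1, Fin.ext_iff]
  have hne02 : i0 ≠ i2 := by simp [hi0, hi2, Fin.ext_iff]
  have hne12 : i1 ≠ i2 := by simp [hi1, hi2, Fin.ext_iff]
  have hred : g i0 • u i0 + g i1 • u i1 + g i2 • u i2 = 0 := by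
    have hsub : ({i0, i1, i2} : Finset (Fin d)) ⊆ Finset.univ := Finset.subset_univ _
    have hzero : ∀ i ∈ Finset.univ, i ∉ ({i0, i1, i2} : Finset (Fin d)) → g i • u i = 0 := by
      intro i _ hi
      simp only [Finset.mem_insert, Finset.mem_singleton] at hi
      push_neg at hi
      obtain ⟨h0, h1, h2⟩ := hi
      have : 3 ≤ i.val := by
        rcases Nat.lt_or_ge i.val 3 with h | h
        · exfalso
          interval_cases hval : i.val
          · exact h0 (by apply Fin.ext; simpa using hval)
          · exact h1 (by apply Fin.ext; simpa using hval)
          · exact h2 (by apply Fin.ext; simpa using hval)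
        · exact h
      rw [hbig i this, zero_smul]
    have := Finset.sum_subset hsub hzero
    rw [hg] at this
    rw [Finset.sum_insert (by simp [hne01, hne02]), Finset.sum_insert (by simp [hne12]),
      Finset.sum_singleton] at this
    rw [add_assoc]; exact this
  have v0 : i0.val < 3 := by simp [hi0]
  have v1 : i1.val < 3 := by simp [hi1]
  have v2 : i2.val < 3 := by simp [hi2]
  obtain ⟨h0, h1, h2⟩ := triple_indep (u i0) (u i1) (u i2)
    (hu0 i0 v0) (hu0 i1 v1) (hu0 i2 v2)
    (hup i0 i1 v0 v1 hne01) (hup i0 i2 v0 v2 hne02)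
    (hup i1 i2 v1 v2 hne12) _ _ _ hred
  intro i
  rcases Nat.lt_or_ge i.val 3 with h | h
  · interval_cases hval : i.val
    · rwa [show i = i0 from Fin.ext (by simpa using hval)]
    · rwa [show i = i1 from Fin.ext (by simpa using hval)]
    · rwa [show i = i2 from Fin.ext (by simpa using hval)]
  · exact hbig i h
lemma kprime_adj_lr (i j : Fin d) :
    (Kprime d).Adj (Sum.inl i) (Sum.inr j) ↔ ¬(i = j ∧ 3 ≤ i.val) := by
  simp [Kprime, SimpleGraph.fromRel_adj]

lemma kprime_not_adj_ll (i k : Fin d) : ¬ (Kprime d).Adj (Sum.inl i) (Sum.inl k) := by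
  simp [Kprime, SimpleGraph.fromRel_adj]

lemma kprime_not_adj_rr (i k : Fin d) : ¬ (Kprime d).Adj (Sum.inr i) (Sum.inr k) := by
  simp [Kprime, SimpleGraph.fromRel_adj]

lemma distsq_one {X : Type*} [MetricSpace X] (x y : X) (h : dist x y ^ 2 = 1) :
    dist x y = 1 := by
  have h0 := dist_nonneg (x := x) (y := y)
  have : (dist x y - 1) * (dist x y + 1) = 0 := by linear_combination h
  rcases mul_eq_zero.mp this with h | h <;> linarith

set_option maxHeartbeats 1000000 in
theorem kprime_not_realizable (hd : 4 ≤ d) : ¬ FDRealizable (Kprime d) d := by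
  rintro ⟨f, finj, hf⟩
  set a : Fin d → EuclideanSpace ℝ (Fin d) := fun i => f (Sum.inl i) with ha
  set b : Fin d → EuclideanSpace ℝ (Fin d) := fun j => f (Sum.inr j) with hb
  set u : Fin d → MM d := fun i => lft (a i) with hu_def
  set v : Fin d → MM d := fun j => lft (b j) with hv_def
  -- basic B-values
  have hab : ∀ i j : Fin d, ¬(i = j ∧ 3 ≤ i.val) → Bf d (u i) (v j) = 1 := by
    intro i j h
    have hadj : (Kprime d).Adj (Sum.inl i) (Sum.inr j) := (kprime_adj_lr i j).mpr h
    have hdist : dist (a i) (b j) = 1 :=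
      (hf (Sum.inl i) (Sum.inr j) (by simp)).mp hadj
    rw [hu_def, hv_def, Bf_lft, hdist, one_pow]
  have hab_ne : ∀ i : Fin d, 3 ≤ i.val → Bf d (u i) (v i) ≠ 1 := by
    intro i h3 heq
    rw [hu_def, hv_def, Bf_lft] at heq
    have hdist : dist (a i) (b i) = 1 := distsq_one _ _ heq
    have : (Kprime d).Adj (Sum.inl i) (Sum.inr i) :=
      (hf (Sum.inl i) (Sum.inr i) (by simp)).mpr hdist
    rw [kprime_adj_lr] at this
    exact this ⟨rfl, h3⟩
  have hself_u : ∀ i : Fin d, Bf d (u i) (u i) = 0 := by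
    intro i; rw [hu_def, Bf_lft]; simp
  have hself_v : ∀ j : Fin d, Bf d (v j) (v j) = 0 := by
    intro j; rw [hv_def, Bf_lft]; simp
  have haa : ∀ i k : Fin d, i ≠ k → 0 < Bf d (u i) (u k) ∧ Bf d (u i) (u k) ≠ 1 := by
    intro i k hik
    have hne' : a i ≠ a k := fun h => hik (Sum.inl.inj (finj h))
    have hpos : 0 < dist (a i) (a k) := dist_pos.mpr hne'
    constructor
    · rw [hu_def, Bf_lft]; positivity
    · intro heq
      rw [hu_def, Bf_lft] at heq
      have hdist := distsq_one _ _ heq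
      exact (kprime_not_adj_ll i k)
        ((hf (Sum.inl i) (Sum.inl k) (by simp [hik])).mpr hdist)
  have hbb : ∀ i k : Fin d, i ≠ k → 0 < Bf d (v i) (v k) ∧ Bf d (v i) (v k) ≠ 1 := by
    intro i k hik
    have hne' : b i ≠ b k := fun h => hik (Sum.inr.inj (finj h))
    have hpos : 0 < dist (b i) (b k) := dist_pos.mpr hne'
    constructor
    · rw [hv_def, Bf_lft]; positivity
    · intro heq
      rw [hv_def, Bf_lft] at heq
      have hdist := distsq_one _ _ heq
      exact (kprime_not_adj_rr i k)
        ((hf (Sum.inr i) (Sum.inr k) (by simp [hik])).mpr hdist)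
  have hba : ∀ i j : Fin d, ¬(i = j ∧ 3 ≤ i.val) → Bf d (v j) (u i) = 1 := by
    intro i j h; rw [Bf_symm]; exact hab i j h
  -- independence
  have hu : LinearIndependent ℝ u :=
    indep_aux hd u v hab hab_ne (fun i _ => hself_u i)
      (fun i k _ _ hik => (haa i k hik).1)
  have hv : LinearIndependent ℝ v := by
    apply indep_aux hd v u
    · intro i j h
      rw [Bf_symm]
      apply hab j i
      rintro ⟨rfl, h3⟩
      exact h ⟨rfl, h3⟩
    · intro i h3 heq
      rw [Bf_symm] at heq
      exact hab_ne i h3 heq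
    · exact fun i _ => hself_v i
    · exact fun i k _ _ hik => (hbb i k hik).1
  -- dimensions
  have fM : finrank ℝ (MM d) = d + 2 := by
    simp [Module.finrank_prod, finrank_euclideanSpace_fin]
    omega
  set U := span ℝ (Set.range u) with hU_def
  set V := span ℝ (Set.range v) with hV_def
  have hUrank : finrank ℝ ↥U = d := by
    rw [hU_def, finrank_span_eq_card hu, Fintype.card_fin]
  have hVrank : finrank ℝ ↥V = d := by
    rw [hV_def, finrank_span_eq_card hv, Fintype.card_fin]
  set σ : MM d →ₗ[ℝ] ℝ :=
    (LinearMap.snd ℝ (EuclideanSpace ℝ (Fin d)) ℝ).comp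
      (LinearMap.snd ℝ ℝ (EuclideanSpace ℝ (Fin d) × ℝ)) with hσ_def
  have hσu : ∀ i, σ (u i) = 1 := fun i => lft_snd (a i)
  have hσv : ∀ j, σ (v j) = 1 := fun j => lft_snd (b j)
  have hσker : finrank ℝ ↥(LinearMap.ker σ) = d + 1 := by
    have hsurj : LinearMap.range σ = ⊤ := by
      rw [LinearMap.range_eq_top]
      intro r
      exact ⟨(0, 0, r), rfl⟩
    have := LinearMap.finrank_range_add_finrank_ker σ
    rw [hsurj, finrank_top, fM] at this
    have h1 : finrank ℝ ℝ = 1 := Module.finrank_self ℝ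
    omega
  set W := U ⊓ V with hW_def
  set W0 := W ⊓ LinearMap.ker σ with hW0_def
  -- facts about elements of W0
  have wfact : ∀ w ∈ W0,
      (∀ k : Fin d, k.val < 3 → Bf d w (u k) = 0 ∧ Bf d w (v k) = 0) ∧
      ((∀ l : Fin d, 3 ≤ l.val → Bf d w (v l) = 0) → w = 0) := by
    intro w hw
    have hwU : w ∈ U := hw.1.1
    have hwV : w ∈ V := hw.1.2
    have hwσ : σ w = 0 := hw.2
    obtain ⟨c, hc⟩ := (mem_span_range_iff_exists_fun ℝ).mp hwU
    obtain ⟨e, he⟩ := (mem_span_range_iff_exists_fun ℝ).mp hwV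
    have hcsum : (∑ i, c i) = 0 := by
      have h := congrArg σ hc
      simp only [map_sum, map_smul, smul_eq_mul] at h
      rw [Finset.sum_congr rfl (fun i _ => by rw [hσu i, mul_one])] at h
      rw [h, hwσ]
    have hesum : (∑ j, e j) = 0 := by
      have h := congrArg σ he
      simp only [map_sum, map_smul, smul_eq_mul] at h
      rw [Finset.sum_congr rfl (fun j _ => by rw [hσv j, mul_one])] at h
      rw [h, hwσ]
    have hwu : ∀ k : Fin d, k.val < 3 → Bf d w (u k) = 0 := by
      intro k hk
      have h := congrArg (fun t => Bf d t (u k)) he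
      simp only [map_sum, map_smul, LinearMap.sum_apply, LinearMap.smul_apply,
        smul_eq_mul] at h
      rw [Finset.sum_congr rfl (fun j _ => by
        rw [hba k j (fun hh => by omega), mul_one])] at h
      rw [← h, hesum]
    have hwv : ∀ k : Fin d, k.val < 3 → Bf d w (v k) = 0 := by
      intro k hk
      have h := congrArg (fun t => Bf d t (v k)) hc
      simp only [map_sum, map_smul, LinearMap.sum_apply, LinearMap.smul_apply,
        smul_eq_mul] at h
      rw [Finset.sum_congr rfl (fun i _ => by
        rw [hab i k (fun hh => by
          obtain ⟨rfl, h3⟩ := hh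
          omega), mul_one])] at h
      rw [← h, hcsum]
    refine ⟨fun k hk => ⟨hwu k hk, hwv k hk⟩, ?_⟩
    intro hl
    by_contra hwne
    -- w is orthogonal to all v's, hence B w w = 0
    have hallv : ∀ l : Fin d, Bf d w (v l) = 0 := by
      intro l
      rcases Nat.lt_or_ge l.val 3 with h | h
      · exact hwv l h
      · exact hl l h
    have hww : Bf d w w = 0 := by
      have h := congrArg (fun t => Bf d w t) he
      simp only [map_sum, map_smul, smul_eq_mul] at h
      rw [Finset.sum_congr rfl (fun l _ => by rw [hallv l, mul_zero])] at h
      rw [← h, Finset.sum_const_zero]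
    -- negative definiteness contradiction
    set i0 : Fin d := ⟨0, by omega⟩ with hi0
    have hgg : 0 < Bf d (u i0 + v i0) (u i0 + v i0) := by
      have h1 := hab i0 i0 (by rintro ⟨-, h3⟩; simp [hi0] at h3)
      have h2 := hba i0 i0 (by rintro ⟨-, h3⟩; simp [hi0] at h3)
      simp only [map_add, LinearMap.add_apply]
      rw [hself_u i0, hself_v i0, h1, h2]
      norm_num
    have hgw : Bf d (u i0 + v i0) w = 0 := by
      simp only [map_add, LinearMap.add_apply]
      rw [Bf_symm (u i0) w, Bf_symm (v i0) w,
        hwu i0 (by simp [hi0]), hwv i0 (by simp [hi0])]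
      norm_num
    have := Bf_negdef (u i0 + v i0) w hgg hgw hwne
    rw [hww] at this
    exact lt_irrefl 0 this
  -- finrank W0 ≤ d - 3
  have hW0le : finrank ℝ ↥W0 ≤ d - 3 := by
    set Ψ : MM d →ₗ[ℝ] (Fin (d - 3) → ℝ) :=
      LinearMap.pi (fun l => Bf d (v ⟨l.val + 3, by omega⟩)) with hΨ_def
    have hinj : Function.Injective (Ψ.domRestrict W0) := by
      rw [← LinearMap.ker_eq_bot]
      rw [LinearMap.ker_eq_bot']
      intro m hm
      rw [LinearMap.domRestrict_apply] at hm
      have hm' : ∀ l : Fin (d - 3), Bf d (v ⟨l.val + 3, by omega⟩) m.val = 0 := by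
        intro l
        have h := congrFun hm l
        simpa [hΨ_def, LinearMap.pi_apply] using h
      have hz : (m : MM d) = 0 := by
        apply (wfact m.val m.property).2
        intro l hl
        have hlx : l = ⟨(⟨l.val - 3, by omega⟩ : Fin (d - 3)).val + 3, by omega⟩ := by
          apply Fin.ext; simp; omega
        rw [Bf_symm, hlx]
        exact hm' ⟨l.val - 3, by omega⟩
      exact Submodule.coe_eq_zero.mp hz
    have hle := LinearMap.finrank_le_finrank_of_injective hinj
    rwa [Module.finrank_fintype_fun_eq_card, Fintype.card_fin] at hle
  -- arithmetic
  have A1 : finrank ℝ ↥(U ⊔ V) + finrank ℝ ↥W = d + d := by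
    rw [hW_def]
    rw [Submodule.finrank_sup_add_finrank_inf_eq U V, hUrank, hVrank]
  have A2 : finrank ℝ ↥(U ⊔ V) ≤ d + 2 := fM ▸ Submodule.finrank_le _
  have A3 : finrank ℝ ↥(W ⊔ LinearMap.ker σ) + finrank ℝ ↥W0 =
      finrank ℝ ↥W + (d + 1) := by
    rw [hW0_def, Submodule.finrank_sup_add_finrank_inf_eq W (LinearMap.ker σ), hσker]
  have A4 : finrank ℝ ↥(W ⊔ LinearMap.ker σ) ≤ d + 2 := fM ▸ Submodule.finrank_le _
  have htop : U ⊔ V = ⊤ := by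
    apply Submodule.eq_top_of_finrank_eq
    rw [fM]
    omega
  have hW0ge : d - 3 ≤ finrank ℝ ↥W0 := by omega
  -- orthogonal-to-everything implies zero
  have orthzero : ∀ z : MM d, (∀ k, Bf d z (u k) = 0) → (∀ l, Bf d z (v l) = 0) →
      z = 0 := by
    intro z hzu hzv
    apply Bf_nondeg
    intro y
    have hy : y ∈ U ⊔ V := htop ▸ Submodule.mem_top
    rcases Submodule.mem_sup.mp hy with ⟨yu, hyu, yv, hyv, rfl⟩
    obtain ⟨c, hc⟩ := (mem_span_range_iff_exists_fun ℝ).mp hyu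
    obtain ⟨e, he⟩ := (mem_span_range_iff_exists_fun ℝ).mp hyv
    rw [map_add, ← hc, ← he]
    simp only [map_sum, map_smul, smul_eq_mul]
    simp [hzu, hzv]
  -- the six core vectors are independent
  obtain ⟨i0, hval0⟩ : ∃ i : Fin d, i.val = 0 := ⟨⟨0, by omega⟩, rfl⟩
  obtain ⟨i1, hval1⟩ : ∃ i : Fin d, i.val = 1 := ⟨⟨1, by omega⟩, rfl⟩
  obtain ⟨i2, hval2⟩ : ∃ i : Fin d, i.val = 2 := ⟨⟨2, by omega⟩, rfl⟩
  have hnm : ∀ i : Fin d, i.val < 3 → ∀ k : Fin d, ¬(i = k ∧ 3 ≤ i.val) := by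
    intro i hi k
    rintro ⟨rfl, h3⟩
    omega
  have hnm' : ∀ i : Fin d, i.val < 3 → ∀ k : Fin d, ¬(k = i ∧ 3 ≤ k.val) := by
    intro i hi k
    rintro ⟨rfl, h3⟩
    omega
  have hv0 : i0.val < 3 := by omega
  have hv1 : i1.val < 3 := by omega
  have hv2 : i2.val < 3 := by omega
  have hne01 : i0 ≠ i1 := fun h => by have := congrArg Fin.val h; omega
  have hne02 : i0 ≠ i2 := fun h => by have := congrArg Fin.val h; omega
  have hne12 : i1 ≠ i2 := fun h => by have := congrArg Fin.val h; omega
  set y6 : Fin 6 → MM d := ![u i0, u i1, u i2, v i0, v i1, v i2] with hy6_def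
  have hy6 : LinearIndependent ℝ y6 := by
    rw [Fintype.linearIndependent_iff]
    intro g hg
    rw [Fin.sum_univ_six] at hg
    have ey0 : y6 0 = u i0 := rfl
    have ey1 : y6 1 = u i1 := rfl
    have ey2 : y6 2 = u i2 := rfl
    have ey3 : y6 3 = v i0 := rfl
    have ey4 : y6 4 = v i1 := rfl
    have ey5 : y6 5 = v i2 := rfl
    rw [ey0, ey1, ey2, ey3, ey4, ey5] at hg
    have hg' : (g 0 • u i0 + g 1 • u i1 + g 2 • u i2) +
        (g 3 • v i0 + g 4 • v i1 + g 5 • v i2) = 0 := by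
      rw [← hg]; abel
    have hμ' : (g 0 + g 1 + g 2) + (g 3 + g 4 + g 5) = 0 := by
      have h := congrArg σ hg'
      simp only [map_add, map_smul, smul_eq_mul, map_zero, hσu, hσv] at h
      linarith
    set τ : ℝ := g 0 + g 1 + g 2 with hτ
    set z : MM d := g 0 • u i0 + g 1 • u i1 + g 2 • u i2 with hz
    have hμ : g 3 + g 4 + g 5 = -τ := by rw [hτ]; linarith
    have hzneg : z = -(g 3 • v i0 + g 4 • v i1 + g 5 • v i2) :=
      eq_neg_of_add_eq_zero_left hg' 
    have hzu : ∀ k : Fin d, Bf d z (u k) = τ := by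
      intro k
      rw [hzneg]
      simp only [map_neg, map_add, map_smul, LinearMap.neg_apply, LinearMap.add_apply,
        LinearMap.smul_apply, smul_eq_mul]
      rw [hba k i0 (hnm' i0 hv0 k), hba k i1 (hnm' i1 hv1 k), hba k i2 (hnm' i2 hv2 k)]
      rw [hτ] at hμ ⊢
      linarith
    have hzv : ∀ l : Fin d, Bf d z (v l) = τ := by
      intro l
      rw [hz]
      simp only [map_add, map_smul, LinearMap.add_apply, LinearMap.smul_apply,
        smul_eq_mul]
      rw [hab i0 l (hnm i0 hv0 l), hab i1 l (hnm i1 hv1 l), hab i2 l (hnm i2 hv2 l)]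
      rw [hτ]; ring
    have hzη : Bf d z (etaV d) = τ := by
      rw [hz]
      simp only [map_add, map_smul, LinearMap.add_apply, LinearMap.smul_apply,
        smul_eq_mul]
      rw [hu_def]
      rw [Bf_lft_eta, Bf_lft_eta, Bf_lft_eta]
      rw [hτ]; ring
    have hτ0 : τ = 0 := by
      have hh_u : ∀ k, Bf d (τ • etaV d - z) (u k) = 0 := by
        intro k
        simp only [map_sub, map_smul, LinearMap.sub_apply, LinearMap.smul_apply,
          smul_eq_mul]
        rw [hzu k, hu_def, Bf_eta_lft]
        ring
      have hh_v : ∀ l, Bf d (τ • etaV d - z) (v l) = 0 := by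
        intro l
        simp only [map_sub, map_smul, LinearMap.sub_apply, LinearMap.smul_apply,
          smul_eq_mul]
        rw [hzv l, hv_def, Bf_eta_lft]
        ring
      have h0 : τ • etaV d - z = 0 := orthzero _ hh_u hh_v
      have hze : z = τ • etaV d := by
        rw [← sub_eq_zero]
        rw [← neg_sub (τ • etaV d) z]
        rw [h0, neg_zero]
      have := hzη
      rw [hze] at this
      simp only [map_smul, LinearMap.smul_apply, smul_eq_mul] at this
      rw [Bf_eta_eta, mul_zero] at this
      exact this.symm
    have hz0 : z = 0 := orthzero z (fun k => by rw [hzu k, hτ0])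
      (fun l => by rw [hzv l, hτ0])
    obtain ⟨e0, e1, e2⟩ := triple_indep (u i0) (u i1) (u i2)
      (hself_u i0) (hself_u i1) (hself_u i2)
      (haa i0 i1 hne01).1 (haa i0 i2 hne02).1 (haa i1 i2 hne12).1
      _ _ _ (by rw [← hz]; exact hz0)
    have hvz : g 3 • v i0 + g 4 • v i1 + g 5 • v i2 = 0 := by
      have h := hzneg
      rw [hz0] at h
      exact neg_eq_zero.mp h.symm
    obtain ⟨e3, e4, e5⟩ := triple_indep (v i0) (v i1) (v i2)
      (hself_v i0) (hself_v i1) (hself_v i2)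
      (hbb i0 i1 hne01).1 (hbb i0 i2 hne02).1 (hbb i1 i2 hne12).1
      _ _ _ hvz
    intro k
    fin_cases k <;> assumption
  -- final dimension count
  set Y := span ℝ (Set.range y6) with hY_def
  have hYrank : finrank ℝ ↥Y = 6 := by
    rw [hY_def, finrank_span_eq_card hy6, Fintype.card_fin]
  have hWY : W0 ≤ (Bf d).orthogonal Y := by
    intro w hw
    rw [LinearMap.BilinForm.mem_orthogonal_iff]
    intro n hn
    have hgen : ∀ x, x ∈ Set.range y6 → Bf d x w = 0 := by
      rintro x ⟨k, rfl⟩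
      have hwf := (wfact w hw).1
      fin_cases k
      · show Bf d (u i0) w = 0; rw [Bf_symm]; exact (hwf i0 hv0).1
      · show Bf d (u i1) w = 0; rw [Bf_symm]; exact (hwf i1 hv1).1
      · show Bf d (u i2) w = 0; rw [Bf_symm]; exact (hwf i2 hv2).1
      · show Bf d (v i0) w = 0; rw [Bf_symm]; exact (hwf i0 hv0).2
      · show Bf d (v i1) w = 0; rw [Bf_symm]; exact (hwf i1 hv1).2
      · show Bf d (v i2) w = 0; rw [Bf_symm]; exact (hwf i2 hv2).2
    show Bf d n w = 0
    refine Submodule.span_induction hgen ?_ ?_ ?_ hn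
    · simp
    · intro x y _ _ hx hy
      simp only [map_add, LinearMap.add_apply]
      rw [hx, hy, add_zero]
    · intro r x _ hx
      simp only [map_smul, LinearMap.smul_apply, smul_eq_mul]
      rw [hx, mul_zero]
  have horth := LinearMap.BilinForm.finrank_add_finrank_orthogonal (Bf_isRefl) Y
  have hrad : (Bf d).orthogonal ⊤ = ⊥ := by
    rw [Submodule.eq_bot_iff]
    intro x hx
    rw [LinearMap.BilinForm.mem_orthogonal_iff] at hx
    apply Bf_nondeg
    intro y
    rw [Bf_symm]
    exact hx y Submodule.mem_top
  rw [hrad, inf_bot_eq, finrank_bot, hYrank, fM] at horth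
  have hmono : finrank ℝ ↥W0 ≤ finrank ℝ ↥((Bf d).orthogonal Y) :=
    Submodule.finrank_mono hWY
  omega
lemma sq_sub_le (a b c : ℝ) (ha : 0 ≤ a) (hb : 0 ≤ b)
    (h1 : a^2 - b^2 ≤ c) (h2 : b^2 - a^2 ≤ c) : (a - b)^2 ≤ c := by
  rcases le_total a b with h | h <;> nlinarith

set_option maxHeartbeats 1000000 in
lemma realizable_left_small {d p q : ℕ} (hd : 4 ≤ d) (hp : p + 1 ≤ d)
    (K : SimpleGraph (Fin p ⊕ Fin q)) (hbip : ∀ u v, K.Adj u v → u.isLeft ≠ v.isLeft) :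
    FDRealizable K d := by
  classical
  set ε : ℝ := 1/4 with hε
  set γ : Fin q → ℝ := fun j => ((j.val:ℝ) + 1) / (8*((p:ℝ)+1)*((q:ℝ)+1)) with hγ
  have hppos : (0:ℝ) ≤ (p:ℝ) := Nat.cast_nonneg p
  have hγpos : ∀ j, 0 < γ j := by
    intro j; rw [hγ]; positivity
  have hγc : ∀ j, 8*((p:ℝ)+1) * γ j ≤ 1 := by
    intro j
    have hjq : (j.val:ℝ) + 1 ≤ (q:ℝ) + 1 := by
      have : (j.val:ℝ) < q := by exact_mod_cast j.isLt
      linarith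
    rw [hγ]
    rw [mul_div_assoc']
    rw [div_le_one (by positivity)]
    nlinarith
  have hγ8 : ∀ j, γ j ≤ 1/8 := by
    intro j
    have h1 := hγc j
    have h2 := (hγpos j).le
    nlinarith
  have hpγ1 : ∀ j, (p:ℝ) * γ j ≤ 1/8 := by
    intro j
    have h1 := hγc j
    have h2 := (hγpos j).le
    nlinarith
  have hpγ : ∀ j, (p:ℝ) * γ j^2 ≤ 1/64 := by
    intro j
    have h1 := hpγ1 j
    have h2 := (hγpos j).le
    have h3 := hγ8 j
    nlinarith
  -- the radial coordinate
  set S : Fin q → ℝ := fun j => 1 - ε^2 + 2*ε*γ j - (p:ℝ)*γ j^2 with hS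
  have hSlb : ∀ j, 1/2 ≤ S j := by
    intro j
    have h1 := hpγ j
    have h2 := (hγpos j).le
    rw [hS, hε]
    norm_num
    nlinarith
  have hSub : ∀ j, S j ≤ 1 := by
    intro j
    have h1 := hγ8 j
    have h2 := (hγpos j).le
    have h3 : (0:ℝ) ≤ (p:ℝ)*γ j^2 := by positivity
    rw [hS, hε]
    nlinarith
  set ρ : Fin q → ℝ := fun j => Real.sqrt (S j) with hρ
  have hρnn : ∀ j, 0 ≤ ρ j := fun j => Real.sqrt_nonneg _
  have hρsq : ∀ j, ρ j^2 = S j := by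
    intro j
    have h0 : 0 ≤ S j := le_trans (by norm_num) (hSlb j)
    exact Real.sq_sqrt h0
  -- the coordinate functions
  set A : Fin p → ℕ → ℝ := fun i k => if k = i.val then ε else 0 with hA
  set Y : Fin q → ℕ → ℝ := fun j k =>
    if h : k < p then (if K.Adj (Sum.inl ⟨k, h⟩) (Sum.inr j) then γ j else -γ j)
    else (if k = d-1 then ρ j else 0) with hY
  set g : Fin p ⊕ Fin q → (Fin d → ℝ) :=
    Sum.elim (fun i k => A i k.val) (fun j k => Y j k.val) with hg
  set f : Fin p ⊕ Fin q → EuclideanSpace ℝ (Fin d) :=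
    fun z => (WithLp.equiv 2 (Fin d → ℝ)).symm (g z) with hf_def
  have hfcoord : ∀ z (k : Fin d), f z k = g z k := fun z k => rfl
  have hdistsq : ∀ z w, dist (f z) (f w)^2 = ∑ k : Fin d, (g z k - g w k)^2 := by
    intro z w
    rw [EuclideanSpace.dist_eq, Real.sq_sqrt (by positivity)]
    refine Finset.sum_congr rfl (fun k _ => ?_)
    rw [hfcoord, hfcoord, Real.dist_eq, sq_abs]
  -- sum splitting
  have hsplit : ∀ F : ℕ → ℝ, (∑ n ∈ Finset.range d, F n) =
      (∑ n ∈ Finset.range p, F n) + ∑ n ∈ Finset.Ico p d, F n := by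
    intro F
    rw [Finset.range_eq_Ico, ← Finset.sum_Ico_consecutive F (Nat.zero_le p)
      (by omega : p ≤ d), ← Finset.range_eq_Ico]
  have htail : ∀ F : ℕ → ℝ, (∀ n, p ≤ n → n < d → n ≠ d-1 → F n = 0) →
      (∑ n ∈ Finset.Ico p d, F n) = F (d-1) := by
    intro F hF
    refine Finset.sum_eq_single_of_mem (d-1)
      (Finset.mem_Ico.mpr ⟨by omega, by omega⟩) ?_
    intro b hb hbne
    rw [Finset.mem_Ico] at hb
    exact hF b hb.1 hb.2 hbne
  -- case LL
  have HLL : ∀ i i' : Fin p, i ≠ i' →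
      dist (f (Sum.inl i)) (f (Sum.inl i'))^2 = 1/8 := by
    intro i i' hne
    have hvne : i.val ≠ i'.val := fun h => hne (Fin.ext h)
    rw [hdistsq]
    have step : (∑ k : Fin d, (g (Sum.inl i) k - g (Sum.inl i') k)^2)
        = ∑ n ∈ Finset.range d, (A i n - A i' n)^2 :=
      Fin.sum_univ_eq_sum_range (fun n => (A i n - A i' n)^2) d
    rw [step]
    have hpt : ∀ n, (A i n - A i' n)^2 =
        (if n = i.val then ε^2 else 0) + (if n = i'.val then ε^2 else 0) := by
      intro n
      simp only [hA]
      by_cases h1 : n = i.val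
      · rw [if_pos h1, if_pos h1, if_neg (h1 ▸ hvne), if_neg (h1 ▸ hvne)]; ring
      · rw [if_neg h1, if_neg h1]
        by_cases h2 : n = i'.val
        · rw [if_pos h2, if_pos h2]; ring
        · rw [if_neg h2, if_neg h2]; ring
    rw [Finset.sum_congr rfl (fun n _ => hpt n), Finset.sum_add_distrib,
      Finset.sum_ite_eq' (Finset.range d) i.val (fun _ => ε^2),
      Finset.sum_ite_eq' (Finset.range d) i'.val (fun _ => ε^2),
      if_pos (Finset.mem_range.mpr (by omega : i.val < d)),
      if_pos (Finset.mem_range.mpr (by omega : i'.val < d))]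
    rw [hε]; norm_num
  -- case LR
  have HLR : ∀ (i : Fin p) (j : Fin q),
      dist (f (Sum.inl i)) (f (Sum.inr j))^2 =
        if K.Adj (Sum.inl i) (Sum.inr j) then 1 else 1 + γ j := by
    intro i j
    have hp0 : 0 < p := i.pos
    rw [hdistsq]
    have step : (∑ k : Fin d, (g (Sum.inl i) k - g (Sum.inr j) k)^2)
        = ∑ n ∈ Finset.range d, (A i n - Y j n)^2 :=
      Fin.sum_univ_eq_sum_range (fun n => (A i n - Y j n)^2) d
    rw [step, hsplit]
    have hi : i.val < p := i.isLt
    have htl : (∑ n ∈ Finset.Ico p d, (A i n - Y j n)^2) = ρ j^2 := by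
      have hzero : ∀ n, p ≤ n → n < d → n ≠ d-1 → (A i n - Y j n)^2 = 0 := by
        intro n h1 h2 h3
        have hn1 : ¬ (n < p) := by omega
        have hn2 : n ≠ i.val := by omega
        simp only [hA, hY]
        rw [if_neg hn2, dif_neg hn1, if_neg h3]
        ring
      rw [htail _ hzero]
      have hn1 : ¬ (d-1 < p) := by omega
      have hn2 : (d-1 : ℕ) ≠ i.val := by omega
      simp only [hA, hY]
      rw [if_neg hn2, dif_neg hn1]
      simp
    have hmem : i.val ∈ Finset.range p := Finset.mem_range.mpr i.isLt
    have hYγ : ∀ n, n < p → (Y j n = γ j ∨ Y j n = -γ j) := by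
      intro n hn
      simp only [hY]
      rw [dif_pos hn]
      by_cases hadj : K.Adj (Sum.inl ⟨n, hn⟩) (Sum.inr j)
      · left; rw [if_pos hadj]
      · right; rw [if_neg hadj]
    have hhd : (∑ n ∈ Finset.range p, (A i n - Y j n)^2)
        = ((p:ℝ) - 1) * γ j^2 + (ε - Y j i.val)^2 := by
      rw [Finset.sum_eq_sum_sdiff_singleton_add hmem]
      have hconst : ∀ n ∈ Finset.range p \ {i.val}, (A i n - Y j n)^2 = γ j^2 := by
        intro n hn
        rw [Finset.mem_sdiff, Finset.mem_range, Finset.mem_singleton] at hn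
        have hA0 : A i n = 0 := by simp only [hA]; exact if_neg hn.2
        rcases hYγ n hn.1 with h | h <;> rw [hA0, h] <;> ring
      rw [Finset.sum_congr rfl hconst, Finset.sum_const,
        Finset.card_sdiff_of_subset (by simpa using hmem), Finset.card_singleton,
        Finset.card_range, nsmul_eq_mul, Nat.cast_sub hp0, Nat.cast_one]
      have hAi : A i i.val = ε := by simp [hA]
      rw [hAi]
    have hYi : Y j i.val = if K.Adj (Sum.inl i) (Sum.inr j) then γ j else -γ j := by
      rw [hY]; exact dif_pos i.isLt
    rw [htl, hhd, hρsq, hYi]; simp only [hS]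
    by_cases hadj : K.Adj (Sum.inl i) (Sum.inr j)
    · rw [if_pos hadj, if_pos hadj]; ring
    · rw [if_neg hadj, if_neg hadj, hε]; ring
  -- case RR bound
  have HRR : ∀ j j' : Fin q,
      dist (f (Sum.inr j)) (f (Sum.inr j'))^2 ≤ 1/4 := by
    intro j j'
    rw [hdistsq]
    have step : (∑ k : Fin d, (g (Sum.inr j) k - g (Sum.inr j') k)^2)
        = ∑ n ∈ Finset.range d, (Y j n - Y j' n)^2 :=
      Fin.sum_univ_eq_sum_range (fun n => (Y j n - Y j' n)^2) d
    rw [step, hsplit]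
    have hYγ : ∀ (j'' : Fin q) n, n < p → (Y j'' n = γ j'' ∨ Y j'' n = -γ j'') := by
      intro j'' n hn
      simp only [hY]
      rw [dif_pos hn]
      by_cases hadj : K.Adj (Sum.inl ⟨n, hn⟩) (Sum.inr j'')
      · left; rw [if_pos hadj]
      · right; rw [if_neg hadj]
    have hhd : (∑ n ∈ Finset.range p, (Y j n - Y j' n)^2) ≤ 1/16 := by
      have hbd : ∀ n ∈ Finset.range p, (Y j n - Y j' n)^2 ≤ (γ j + γ j')^2 := by
        intro n hn
        rw [Finset.mem_range] at hn
        have h1 := hγpos j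
        have h2 := hγpos j'
        rcases hYγ j n hn with h | h <;> rcases hYγ j' n hn with h' | h' <;>
          rw [h, h'] <;> nlinarith
      calc (∑ n ∈ Finset.range p, (Y j n - Y j' n)^2)
          ≤ ∑ n ∈ Finset.range p, (γ j + γ j')^2 := Finset.sum_le_sum hbd
        _ = (p:ℝ) * (γ j + γ j')^2 := by
            rw [Finset.sum_const, Finset.card_range, nsmul_eq_mul]
        _ ≤ 1/16 := by
            have h1 := hpγ1 j
            have h2 := hpγ1 j'
            have h3 := hγ8 j
            have h4 := hγ8 j'
            have h5 := (hγpos j).le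
            have h6 := (hγpos j').le
            nlinarith
    have htl : (∑ n ∈ Finset.Ico p d, (Y j n - Y j' n)^2) = (ρ j - ρ j')^2 := by
      have hzero : ∀ n, p ≤ n → n < d → n ≠ d-1 → (Y j n - Y j' n)^2 = 0 := by
        intro n h1 h2 h3
        have hn1 : ¬ (n < p) := by omega
        simp only [hY]
        rw [dif_neg hn1, dif_neg hn1, if_neg h3, if_neg h3]
        ring
      rw [htail _ hzero]
      have hn1 : ¬ (d-1 < p) := by omega
      simp only [hY]
      rw [dif_neg hn1, dif_neg hn1]
      simp
    have hρbd : (ρ j - ρ j')^2 ≤ 3/16 := by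
      apply sq_sub_le _ _ _ (hρnn j) (hρnn j')
      · rw [hρsq, hρsq]; simp only [hS, hε]
        have h1 := hγ8 j
        have h2 := hγ8 j'
        have h3 := (hγpos j).le
        have h4 := (hγpos j').le
        have h5 := hpγ j
        have h6 := hpγ j'
        have h7 : (0:ℝ) ≤ (p:ℝ)*γ j^2 := by positivity
        have h8 : (0:ℝ) ≤ (p:ℝ)*γ j'^2 := by positivity
        nlinarith
      · rw [hρsq, hρsq]; simp only [hS, hε]
        have h1 := hγ8 j
        have h2 := hγ8 j'
        have h3 := (hγpos j).le
        have h4 := (hγpos j').le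
        have h5 := hpγ j
        have h6 := hpγ j'
        have h7 : (0:ℝ) ≤ (p:ℝ)*γ j^2 := by positivity
        have h8 : (0:ℝ) ≤ (p:ℝ)*γ j'^2 := by positivity
        nlinarith
    rw [htl]
    linarith
  -- injectivity on the right vertices
  have HRRinj : ∀ j j' : Fin q, f (Sum.inr j) = f (Sum.inr j') → j = j' := by
    intro j j' h
    have hcoord := congrArg (fun x : EuclideanSpace ℝ (Fin d) => x ⟨d-1, by omega⟩) h
    simp only [hfcoord] at hcoord
    have hgc : ∀ j'' : Fin q, g (Sum.inr j'') (⟨d-1, by omega⟩ : Fin d) = ρ j'' := by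
      intro j''
      have hn1 : ¬ (d-1 < p) := by omega
      simp only [hg, Sum.elim_inr, hY]
      rw [dif_neg hn1]
      simp
    rw [hgc, hgc] at hcoord
    have hSeq : S j = S j' := by rw [← hρsq, ← hρsq, hcoord]
    have hfac : (γ j - γ j') * (1/2 - (p:ℝ)*(γ j + γ j')) = 0 := by
      simp only [hS, hε] at hSeq
      linear_combination hSeq
    have hγeq : γ j = γ j' := by
      rcases mul_eq_zero.mp hfac with h' | h'
      · linarith
      · exfalso
        have h1 := hpγ1 j
        have h2 := hpγ1 j'
        nlinarith
    have : (j.val:ℝ) = (j'.val:ℝ) := by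
      simp only [hγ] at hγeq
      have hD : (0:ℝ) < 8*((p:ℝ)+1)*((q:ℝ)+1) := by positivity
      rw [div_eq_div_iff (ne_of_gt hD) (ne_of_gt hD)] at hγeq
      have := mul_right_cancel₀ (ne_of_gt hD) hγeq
      linarith
    exact Fin.ext (by exact_mod_cast this)
  -- wrap up
  clear_value f g Y A ρ S γ ε
  refine ⟨f, ?_, ?_⟩
  · intro z w h
    by_contra hne
    match z, w with
    | Sum.inl i, Sum.inl i' =>
      have hii : i ≠ i' := fun he => hne (he ▸ rfl)
      have h2 := HLL i i' hii
      rw [h, dist_self] at h2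
      norm_num at h2
    | Sum.inl i, Sum.inr j =>
      have h2 := HLR i j
      rw [h, dist_self] at h2
      have := hγpos j
      split_ifs at h2 <;> norm_num at h2 <;> linarith
    | Sum.inr j, Sum.inl i =>
      have h2 := HLR i j
      rw [← h, dist_comm, dist_self] at h2
      have := hγpos j
      split_ifs at h2 <;> norm_num at h2 <;> linarith
    | Sum.inr j, Sum.inr j' =>
      exact hne (congrArg Sum.inr (HRRinj j j' h))
  · intro z w hzw
    match z, w with
    | Sum.inl i, Sum.inl i' =>
      have hii : i ≠ i' := fun he => hzw (he ▸ rfl)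
      refine iff_of_false (fun hA => by simpa using hbip _ _ hA) (fun h1 => ?_)
      have h2 := HLL i i' hii
      rw [h1] at h2
      norm_num at h2
    | Sum.inl i, Sum.inr j =>
      have h2 := HLR i j
      by_cases hadj : K.Adj (Sum.inl i) (Sum.inr j)
      · rw [if_pos hadj] at h2
        exact iff_of_true hadj (distsq_one _ _ h2)
      · rw [if_neg hadj] at h2
        refine iff_of_false hadj (fun h1 => ?_)
        rw [h1] at h2
        have := hγpos j
        norm_num at h2
        linarith
    | Sum.inr j, Sum.inl i =>
      have h2 := HLR i j
      rw [← dist_comm (f (Sum.inr j)) (f (Sum.inl i))] at h2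
      rw [K.adj_comm]
      by_cases hadj : K.Adj (Sum.inl i) (Sum.inr j)
      · rw [if_pos hadj] at h2
        exact iff_of_true hadj (distsq_one _ _ h2)
      · rw [if_neg hadj] at h2
        refine iff_of_false hadj (fun h1 => ?_)
        rw [h1] at h2
        have := hγpos j
        norm_num at h2
        linarith
    | Sum.inr j, Sum.inr j' =>
      refine iff_of_false (fun hA => by simpa using hbip _ _ hA) (fun h1 => ?_)
      have h2 := HRR j j'
      rw [h1] at h2
      norm_num at h2
end AuxFDR

/-- for `d ≥ 4`, every bipartite graph on fewer than `2d` vertices is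
realizable as a faithful unit distance graph in `ℝ^d`, while the `2d`-vertex bipartite graph
`K_{d,d}` minus a matching of size `d - 3` is not; hence the minimum number of vertices of a
bipartite graph not realizable as a faithful distance graph in `ℝ^d` is exactly `2d`. -/
theorem stmt_13 (d : ℕ) (hd : 4 ≤ d) :
    (∀ p q : ℕ, p + q < 2 * d → ∀ K : SimpleGraph (Fin p ⊕ Fin q),
      (∀ u v, K.Adj u v → u.isLeft ≠ v.isLeft) → FDRealizable K d) ∧
    ¬ FDRealizable (Kprime d) d := by
  constructor
  · intro p q hpq K hbip
    by_cases hp : p + 1 ≤ d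
    · exact realizable_left_small hd hp K hbip
    · have hq : q + 1 ≤ d := by omega
      set K' : SimpleGraph (Fin q ⊕ Fin p) := K.comap Sum.swap with hK'
      have hbip' : ∀ u v, K'.Adj u v → u.isLeft ≠ v.isLeft := by
        intro u v h
        have h2 := hbip _ _ (by exact h : K.Adj u.swap v.swap)
        cases u <;> cases v <;> simp_all
      obtain ⟨g, ginj, hg⟩ := realizable_left_small hd hq K' hbip'
      refine ⟨g ∘ Sum.swap, ginj.comp Sum.swap_leftInverse.injective, ?_⟩
      intro u v huv
      have h1 := hg u.swap v.swap (fun h => huv (Sum.swap_leftInverse.injective h))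
      have h2 : K'.Adj u.swap v.swap = K.Adj u v := by
        rw [hK']
        simp [SimpleGraph.comap_adj, Sum.swap_swap]
      rw [h2] at h1
      exact h1
  · exact kprime_not_realizable hd
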